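/- In the cut-free calculus GwIKt†, the right box rule is height-preserving invertible: for all n ≥ 1, if Γ ⇒ □β is derivable with height n, then •Γ ⇒ β is derivable with height at most n. -/
import Mathlib


/-- Formulas of weak intuitionistic tense logic. -/
inductive Fml : Type
  | var : ℕ → Fml
  | top : Fml
  | bot : Fml
  | imp : Fml → Fml → Fml
  | and : Fml → Fml → Fml
  | or  : Fml → Fml → Fml
  | dia : Fml → Fml   -- ◇ (future diamond)
  | box : Fml → Fml   -- □ (future box)
  | bdia : Fml → Fml  -- ◆ (past diamond)
  | bbox : Fml → Fml  -- ■ (past box)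

/-- Atomic formulas: variables, ⊤, ⊥. -/
def Fml.Atomic : Fml → Prop
  | .var _ => True
  | .top => True
  | .bot => True
  | _ => False

/-- Formula structures: formulas closed under comma, ∘, •. -/
inductive FS : Type
  | fml : Fml → FS
  | comma : FS → FS → FS
  | circ : FS → FS    -- ∘, structural ◇
  | bullet : FS → FS  -- •, structural ◆

/-- Single-hole contexts. -/
inductive Ctx : Type
  | hole : Ctx
  | commaL : Ctx → FS → Ctx
  | commaR : FS → Ctx → Ctx
  | circ : Ctx → Ctx
  | bullet : Ctx → Ctx

/-- Fill the hole of a context with a structure. -/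
def Ctx.plug : Ctx → FS → FS
  | .hole, Δ => Δ
  | .commaL C Γ, Δ => .comma (C.plug Δ) Γ
  | .commaR Γ C, Δ => .comma Γ (C.plug Δ)
  | .circ C, Δ => .circ (C.plug Δ)
  | .bullet C, Δ => .bullet (C.plug Δ)

/-- Multi-hole contexts (for the mix rules Γ[·]ⁿ). -/
inductive MCtx : Type
  | hole : MCtx
  | fml : Fml → MCtx
  | comma : MCtx → MCtx → MCtx
  | circ : MCtx → MCtx
  | bullet : MCtx → MCtx

/-- Fill all holes of a multi-context with the same structure. -/
def MCtx.plug : MCtx → FS → FS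
  | .hole, Δ => Δ
  | .fml α, _ => .fml α
  | .comma C D, Δ => .comma (C.plug Δ) (D.plug Δ)
  | .circ C, Δ => .circ (C.plug Δ)
  | .bullet C, Δ => .bullet (C.plug Δ)

/-- Number n of designated occurrences in Γ[·]ⁿ. -/
def MCtx.holes : MCtx → ℕ
  | .hole => 1
  | .fml _ => 0
  | .comma C D => C.holes + D.holes
  | .circ C => C.holes
  | .bullet C => C.holes

/-- Cut formulas allowed in (Cut_*): not atomic, not □- or ■-formulas, not implications. -/
def Fml.Starish (α : Fml) : Prop :=
  ¬ α.Atomic ∧ (∀ a, α ≠ .box a) ∧ (∀ a, α ≠ .bbox a) ∧ (∀ a b, α ≠ .imp a b)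

/-- Flags selecting the variant of the calculus:
`idFull`: unrestricted identity axiom (Id) vs atomic (Id_A);
`conF`: full formula contraction (Con_F) vs the restricted contractions
(Con_A), (Con_□), (Con_■), (Con_→);
`cut`: the single cut rule (Cut);
`mix`: the four cut-like rules (Mix_A), (Mix_□), (Mix_■), (Mix_→), (Cut_*). -/
structure Rules where
  idFull : Bool
  conF : Bool
  cut : Bool
  mix : Bool

/-- `DerH R n Γ β`: the sequent Γ ⇒ β has a derivation of height at most `n`
in the calculus determined by `R`. -/
inductive DerH (R : Rules) : ℕ → FS → Fml → Prop
  -- (Id_A)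
  | idA (n : ℕ) (α : Fml) : 1 ≤ n → α.Atomic → DerH R n (.fml α) α
  -- (Id), only in calculi with unrestricted identity
  | idF (n : ℕ) (α : Fml) : R.idFull = true → 1 ≤ n → DerH R n (.fml α) α
  -- (⊤)
  | topL (n : ℕ) (Γ : Ctx) (Δ : FS) (β : Fml) :
      DerH R n (Γ.plug (.fml .top)) β → DerH R (n + 1) (Γ.plug Δ) β
  -- (⊥)
  | botL (n : ℕ) (Γ : Ctx) (Δ : FS) (β : Fml) :
      DerH R n Δ .bot → DerH R (n + 1) (Γ.plug Δ) β
  -- (∧L)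
  | andL (n : ℕ) (Γ : Ctx) (α₁ α₂ β : Fml) :
      DerH R n (Γ.plug (.comma (.fml α₁) (.fml α₂))) β →
      DerH R (n + 1) (Γ.plug (.fml (α₁.and α₂))) β
  -- (∧R)
  | andR (n : ℕ) (Γ : FS) (β₁ β₂ : Fml) :
      DerH R n Γ β₁ → DerH R n Γ β₂ → DerH R (n + 1) Γ (β₁.and β₂)
  -- (∨L)
  | orL (n : ℕ) (Γ : Ctx) (α₁ α₂ β : Fml) :
      DerH R n (Γ.plug (.fml α₁)) β → DerH R n (Γ.plug (.fml α₂)) β →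
      DerH R (n + 1) (Γ.plug (.fml (α₁.or α₂))) β
  -- (∨R), i = 1
  | orR₁ (n : ℕ) (Γ : FS) (β₁ β₂ : Fml) :
      DerH R n Γ β₁ → DerH R (n + 1) Γ (β₁.or β₂)
  -- (∨R), i = 2
  | orR₂ (n : ℕ) (Γ : FS) (β₁ β₂ : Fml) :
      DerH R n Γ β₂ → DerH R (n + 1) Γ (β₁.or β₂)
  -- (→L)
  | impL (n : ℕ) (Γ : Ctx) (Δ : FS) (α₁ α₂ β : Fml) :
      DerH R n Δ α₁ → DerH R n (Γ.plug (.fml α₂)) β →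
      DerH R (n + 1) (Γ.plug (.comma Δ (.fml (α₁.imp α₂)))) β
  -- (→R)
  | impR (n : ℕ) (Γ : FS) (β₁ β₂ : Fml) :
      DerH R n (.comma (.fml β₁) Γ) β₂ → DerH R (n + 1) Γ (β₁.imp β₂)
  -- (◇L)
  | diaL (n : ℕ) (Γ : Ctx) (α β : Fml) :
      DerH R n (Γ.plug (.circ (.fml α))) β → DerH R (n + 1) (Γ.plug (.fml (α.dia))) β
  -- (◇R)
  | diaR (n : ℕ) (Γ : FS) (β : Fml) :
      DerH R n Γ β → DerH R (n + 1) (.circ Γ) (β.dia)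
  -- (◆L)
  | bdiaL (n : ℕ) (Γ : Ctx) (α β : Fml) :
      DerH R n (Γ.plug (.bullet (.fml α))) β → DerH R (n + 1) (Γ.plug (.fml (α.bdia))) β
  -- (◆R)
  | bdiaR (n : ℕ) (Γ : FS) (β : Fml) :
      DerH R n Γ β → DerH R (n + 1) (.bullet Γ) (β.bdia)
  -- (■L)
  | bboxL (n : ℕ) (Γ : Ctx) (α β : Fml) :
      DerH R n (Γ.plug (.fml α)) β → DerH R (n + 1) (Γ.plug (.circ (.fml (α.bbox)))) β
  -- (■R)
  | bboxR (n : ℕ) (Γ : FS) (β : Fml) :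
      DerH R n (.circ Γ) β → DerH R (n + 1) Γ (β.bbox)
  -- (□L)
  | boxL (n : ℕ) (Γ : Ctx) (α β : Fml) :
      DerH R n (Γ.plug (.fml α)) β → DerH R (n + 1) (Γ.plug (.bullet (.fml (α.box)))) β
  -- (□R)
  | boxR (n : ℕ) (Γ : FS) (β : Fml) :
      DerH R n (.bullet Γ) β → DerH R (n + 1) Γ (β.box)
  -- (Con∘)
  | conCirc (n : ℕ) (Γ : Ctx) (Δ₁ Δ₂ : FS) (β : Fml) :
      DerH R n (Γ.plug (.comma (.circ Δ₁) (.circ Δ₂))) β →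
      DerH R (n + 1) (Γ.plug (.circ (.comma Δ₁ Δ₂))) β
  -- (Con•)
  | conBullet (n : ℕ) (Γ : Ctx) (Δ₁ Δ₂ : FS) (β : Fml) :
      DerH R n (Γ.plug (.comma (.bullet Δ₁) (.bullet Δ₂))) β →
      DerH R (n + 1) (Γ.plug (.bullet (.comma Δ₁ Δ₂))) β
  -- (Con_F), only with full contraction
  | conF (n : ℕ) (Γ : Ctx) (α β : Fml) : R.conF = true →
      DerH R n (Γ.plug (.comma (.fml α) (.fml α))) β →
      DerH R (n + 1) (Γ.plug (.fml α)) β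
  -- (Con_A), only in the restricted calculi
  | conA (n : ℕ) (Γ : Ctx) (α β : Fml) : R.conF = false → α.Atomic →
      DerH R n (Γ.plug (.comma (.fml α) (.fml α))) β →
      DerH R (n + 1) (Γ.plug (.fml α)) β
  -- (Con_□)
  | conBox (n : ℕ) (Γ : Ctx) (α β : Fml) : R.conF = false →
      DerH R n (Γ.plug (.comma (.fml α.box) (.fml α.box))) β →
      DerH R (n + 1) (Γ.plug (.fml α.box)) β
  -- (Con_■)
  | conBBox (n : ℕ) (Γ : Ctx) (α β : Fml) : R.conF = false →
      DerH R n (Γ.plug (.comma (.fml α.bbox) (.fml α.bbox))) β →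
      DerH R (n + 1) (Γ.plug (.fml α.bbox)) β
  -- (Con_→)
  | conImp (n : ℕ) (Γ : Ctx) (α₁ α₂ β : Fml) : R.conF = false →
      DerH R n (Γ.plug (.comma (.fml (α₁.imp α₂)) (.fml (α₁.imp α₂)))) β →
      DerH R (n + 1) (Γ.plug (.fml (α₁.imp α₂))) β
  -- (Wk), i = 1
  | wk₁ (n : ℕ) (Γ : Ctx) (Δ₁ Δ₂ : FS) (β : Fml) :
      DerH R n (Γ.plug Δ₁) β → DerH R (n + 1) (Γ.plug (.comma Δ₁ Δ₂)) β
  -- (Wk), i = 2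
  | wk₂ (n : ℕ) (Γ : Ctx) (Δ₁ Δ₂ : FS) (β : Fml) :
      DerH R n (Γ.plug Δ₂) β → DerH R (n + 1) (Γ.plug (.comma Δ₁ Δ₂)) β
  -- (Ex)
  | ex (n : ℕ) (Γ : Ctx) (Δ₁ Δ₂ : FS) (β : Fml) :
      DerH R n (Γ.plug (.comma Δ₁ Δ₂)) β → DerH R (n + 1) (Γ.plug (.comma Δ₂ Δ₁)) β
  -- (Dual∘•)
  | dualCB (n : ℕ) (Γ : Ctx) (Δ₁ Δ₂ : FS) (β : Fml) :
      DerH R n (.comma (.circ Δ₁) Δ₂) .bot →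
      DerH R (n + 1) (Γ.plug (.comma Δ₁ (.bullet Δ₂))) β
  -- (Dual•∘)
  | dualBC (n : ℕ) (Γ : Ctx) (Δ₁ Δ₂ : FS) (β : Fml) :
      DerH R n (.comma (.bullet Δ₁) Δ₂) .bot →
      DerH R (n + 1) (Γ.plug (.comma Δ₁ (.circ Δ₂))) β
  -- (Cut)
  | cut (n : ℕ) (Γ : Ctx) (Δ : FS) (α β : Fml) : R.cut = true →
      DerH R n Δ α → DerH R n (Γ.plug (.fml α)) β → DerH R (n + 1) (Γ.plug Δ) β
  -- (Mix_A)
  | mixA (n : ℕ) (Γ : MCtx) (Δ : FS) (α β : Fml) : R.mix = true →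
      α.Atomic → 1 ≤ Γ.holes →
      DerH R n Δ α → DerH R n (Γ.plug (.fml α)) β → DerH R (n + 1) (Γ.plug Δ) β
  -- (Mix_□)
  | mixBox (n : ℕ) (Γ : MCtx) (Δ : FS) (α β : Fml) : R.mix = true →
      1 ≤ Γ.holes →
      DerH R n Δ α.box → DerH R n (Γ.plug (.fml α.box)) β → DerH R (n + 1) (Γ.plug Δ) β
  -- (Mix_■)
  | mixBBox (n : ℕ) (Γ : MCtx) (Δ : FS) (α β : Fml) : R.mix = true →
      1 ≤ Γ.holes →
      DerH R n Δ α.bbox → DerH R n (Γ.plug (.fml α.bbox)) β → DerH R (n + 1) (Γ.plug Δ) β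
  -- (Mix_→)
  | mixImp (n : ℕ) (Γ : MCtx) (Δ : FS) (α₁ α₂ β : Fml) : R.mix = true →
      1 ≤ Γ.holes →
      DerH R n Δ (α₁.imp α₂) → DerH R n (Γ.plug (.fml (α₁.imp α₂))) β →
      DerH R (n + 1) (Γ.plug Δ) β
  -- (Cut_*)
  | cutStar (n : ℕ) (Γ : Ctx) (Δ : FS) (α β : Fml) : R.mix = true →
      α.Starish →
      DerH R n Δ α → DerH R n (Γ.plug (.fml α)) β → DerH R (n + 1) (Γ.plug Δ) β

/-- Derivability (some height). -/
def Der (R : Rules) (Γ : FS) (β : Fml) : Prop := ∃ n, DerH R n Γ β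

/-- GwIKt: full identity, full contraction, with cut. -/
def GwIKt : Rules := ⟨true, true, true, false⟩
/-- GwIKt without the cut rule. -/
def GwIKtCF : Rules := ⟨true, true, false, false⟩
/-- GwIKt† : atomic identity, restricted contractions, with cut. -/
def GwIKtD : Rules := ⟨false, false, true, false⟩
/-- cut-free GwIKt†. -/
def GwIKtDCF : Rules := ⟨false, false, false, false⟩
/-- GwIKt‡ : cut replaced by the four cut-like rules. -/
def GwIKtDD : Rules := ⟨false, false, false, true⟩


theorem DerH.succ {R : Rules} {n : ℕ} {Γ : FS} {β : Fml}
    (h : DerH R n Γ β) : DerH R (n + 1) Γ β := by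
  induction h with
  | idA n α h1 h2 => exact .idA _ α (by omega) h2
  | idF n α hf h1 => exact .idF _ α hf (by omega)
  | topL n Γ Δ β _ ih => exact .topL _ Γ Δ β ih
  | botL n Γ Δ β _ ih => exact .botL _ Γ Δ β ih
  | andL n Γ α₁ α₂ β _ ih => exact .andL _ Γ α₁ α₂ β ih
  | andR n Γ β₁ β₂ _ _ ih₁ ih₂ => exact .andR _ Γ β₁ β₂ ih₁ ih₂
  | orL n Γ α₁ α₂ β _ _ ih₁ ih₂ => exact .orL _ Γ α₁ α₂ β ih₁ ih₂
  | orR₁ n Γ β₁ β₂ _ ih => exact .orR₁ _ Γ β₁ β₂ ih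
  | orR₂ n Γ β₁ β₂ _ ih => exact .orR₂ _ Γ β₁ β₂ ih
  | impL n Γ Δ α₁ α₂ β _ _ ih₁ ih₂ => exact .impL _ Γ Δ α₁ α₂ β ih₁ ih₂
  | impR n Γ β₁ β₂ _ ih => exact .impR _ Γ β₁ β₂ ih
  | diaL n Γ α β _ ih => exact .diaL _ Γ α β ih
  | diaR n Γ β _ ih => exact .diaR _ Γ β ih
  | bdiaL n Γ α β _ ih => exact .bdiaL _ Γ α β ih
  | bdiaR n Γ β _ ih => exact .bdiaR _ Γ β ih
  | bboxL n Γ α β _ ih => exact .bboxL _ Γ α β ih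
  | bboxR n Γ β _ ih => exact .bboxR _ Γ β ih
  | boxL n Γ α β _ ih => exact .boxL _ Γ α β ih
  | boxR n Γ β _ ih => exact .boxR _ Γ β ih
  | conCirc n Γ Δ₁ Δ₂ β _ ih => exact .conCirc _ Γ Δ₁ Δ₂ β ih
  | conBullet n Γ Δ₁ Δ₂ β _ ih => exact .conBullet _ Γ Δ₁ Δ₂ β ih
  | conF n Γ α β hf _ ih => exact .conF _ Γ α β hf ih
  | conA n Γ α β hf ha _ ih => exact .conA _ Γ α β hf ha ih
  | conBox n Γ α β hf _ ih => exact .conBox _ Γ α β hf ih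
  | conBBox n Γ α β hf _ ih => exact .conBBox _ Γ α β hf ih
  | conImp n Γ α₁ α₂ β hf _ ih => exact .conImp _ Γ α₁ α₂ β hf ih
  | wk₁ n Γ Δ₁ Δ₂ β _ ih => exact .wk₁ _ Γ Δ₁ Δ₂ β ih
  | wk₂ n Γ Δ₁ Δ₂ β _ ih => exact .wk₂ _ Γ Δ₁ Δ₂ β ih
  | ex n Γ Δ₁ Δ₂ β _ ih => exact .ex _ Γ Δ₁ Δ₂ β ih
  | dualCB n Γ Δ₁ Δ₂ β _ ih => exact .dualCB _ Γ Δ₁ Δ₂ β ih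
  | dualBC n Γ Δ₁ Δ₂ β _ ih => exact .dualBC _ Γ Δ₁ Δ₂ β ih
  | cut n Γ Δ α β hc _ _ ih₁ ih₂ => exact .cut _ Γ Δ α β hc ih₁ ih₂
  | mixA n Γ Δ α β hm ha hh _ _ ih₁ ih₂ => exact .mixA _ Γ Δ α β hm ha hh ih₁ ih₂
  | mixBox n Γ Δ α β hm hh _ _ ih₁ ih₂ => exact .mixBox _ Γ Δ α β hm hh ih₁ ih₂
  | mixBBox n Γ Δ α β hm hh _ _ ih₁ ih₂ => exact .mixBBox _ Γ Δ α β hm hh ih₁ ih₂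
  | mixImp n Γ Δ α₁ α₂ β hm hh _ _ ih₁ ih₂ => exact .mixImp _ Γ Δ α₁ α₂ β hm hh ih₁ ih₂
  | cutStar n Γ Δ α β hm hs _ _ ih₁ ih₂ => exact .cutStar _ Γ Δ α β hm hs ih₁ ih₂

theorem boxR_inv_aux {n : ℕ} {Γ : FS} {γ : Fml}
    (h : DerH GwIKtDCF n Γ γ) :
    ∀ β : Fml, γ = Fml.box β → DerH GwIKtDCF n (.bullet Γ) β := by
  induction h with
  | idA n α h1 h2 => rintro β rfl; simp [Fml.Atomic] at h2
  | idF n α hf h1 => simp [GwIKtDCF] at hf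
  | topL n Γ Δ β' _ ih =>
      rintro β rfl; exact .topL n (.bullet Γ) Δ β (ih β rfl)
  | botL n Γ Δ β' hp _ =>
      rintro β rfl; exact .botL n (.bullet Γ) Δ β hp
  | andL n Γ α₁ α₂ β' _ ih =>
      rintro β rfl; exact .andL n (.bullet Γ) α₁ α₂ β (ih β rfl)
  | andR => rintro β h; cases h
  | orL n Γ α₁ α₂ β' _ _ ih₁ ih₂ =>
      rintro β rfl; exact .orL n (.bullet Γ) α₁ α₂ β (ih₁ β rfl) (ih₂ β rfl)
  | orR₁ => rintro β h; cases h
  | orR₂ => rintro β h; cases h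
  | impL n Γ Δ α₁ α₂ β' hp _ _ ih₂ =>
      rintro β rfl; exact .impL n (.bullet Γ) Δ α₁ α₂ β hp (ih₂ β rfl)
  | impR => rintro β h; cases h
  | diaL n Γ α β' _ ih =>
      rintro β rfl; exact .diaL n (.bullet Γ) α β (ih β rfl)
  | diaR => rintro β h; cases h
  | bdiaL n Γ α β' _ ih =>
      rintro β rfl; exact .bdiaL n (.bullet Γ) α β (ih β rfl)
  | bdiaR => rintro β h; cases h
  | bboxL n Γ α β' _ ih =>
      rintro β rfl; exact .bboxL n (.bullet Γ) α β (ih β rfl)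
  | bboxR => rintro β h; cases h
  | boxL n Γ α β' _ ih =>
      rintro β rfl; exact .boxL n (.bullet Γ) α β (ih β rfl)
  | boxR n Γ β' hp _ =>
      rintro β h; cases h; exact hp.succ
  | conCirc n Γ Δ₁ Δ₂ β' _ ih =>
      rintro β rfl; exact .conCirc n (.bullet Γ) Δ₁ Δ₂ β (ih β rfl)
  | conBullet n Γ Δ₁ Δ₂ β' _ ih =>
      rintro β rfl; exact .conBullet n (.bullet Γ) Δ₁ Δ₂ β (ih β rfl)
  | conF n Γ α β' hf => simp [GwIKtDCF] at hf
  | conA n Γ α β' hf ha _ ih =>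
      rintro β rfl; exact .conA n (.bullet Γ) α β hf ha (ih β rfl)
  | conBox n Γ α β' hf _ ih =>
      rintro β rfl; exact .conBox n (.bullet Γ) α β hf (ih β rfl)
  | conBBox n Γ α β' hf _ ih =>
      rintro β rfl; exact .conBBox n (.bullet Γ) α β hf (ih β rfl)
  | conImp n Γ α₁ α₂ β' hf _ ih =>
      rintro β rfl; exact .conImp n (.bullet Γ) α₁ α₂ β hf (ih β rfl)
  | wk₁ n Γ Δ₁ Δ₂ β' _ ih =>
      rintro β rfl; exact .wk₁ n (.bullet Γ) Δ₁ Δ₂ β (ih β rfl)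
  | wk₂ n Γ Δ₁ Δ₂ β' _ ih =>
      rintro β rfl; exact .wk₂ n (.bullet Γ) Δ₁ Δ₂ β (ih β rfl)
  | ex n Γ Δ₁ Δ₂ β' _ ih =>
      rintro β rfl; exact .ex n (.bullet Γ) Δ₁ Δ₂ β (ih β rfl)
  | dualCB n Γ Δ₁ Δ₂ β' hp _ =>
      rintro β rfl; exact .dualCB n (.bullet Γ) Δ₁ Δ₂ β hp
  | dualBC n Γ Δ₁ Δ₂ β' hp _ =>
      rintro β rfl; exact .dualBC n (.bullet Γ) Δ₁ Δ₂ β hp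
  | cut _ _ _ _ _ hc => simp [GwIKtDCF] at hc
  | mixA _ _ _ _ _ hm => simp [GwIKtDCF] at hm
  | mixBox _ _ _ _ _ hm => simp [GwIKtDCF] at hm
  | mixBBox _ _ _ _ _ hm => simp [GwIKtDCF] at hm
  | mixImp _ _ _ _ _ _ hm => simp [GwIKtDCF] at hm
  | cutStar _ _ _ _ _ hm => simp [GwIKtDCF] at hm

/-- height-preserving invertibility of (□R) in cut-free GwIKt†. -/
theorem stmt9_boxR_invertible :
    ∀ n : ℕ, 1 ≤ n → ∀ (Γ : FS) (β : Fml),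
      DerH GwIKtDCF n Γ β.box → DerH GwIKtDCF n (.bullet Γ) β := by
  intro n _ Γ β h
  exact boxR_inv_aux h β rfl
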